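/- arXiv:1003.2912 — 3 statements merged into one kernel-verified Lean document; each statement's English description precedes it below -/
import Mathlib

section
/- Let $\Delta$ be a $(d-1)$-dimensional matroid on $[n]$. Then for every $k\geq 1$ the number of basic $k$-covers of $\Delta$ satisfies $|\{\text{basic }k\text{-covers of }\Delta\}| \leq |\mathcal{F}(\Delta)|\cdot\binom{k+d-1}{d-1} \leq \binom{n}{d}\cdot\binom{k+d-1}{d-1}$; in particular the number of basic $k$-covers is $O(k^{d-1})$. -/
open MvPolynomial Filter

/-- A simplicial complex on `[n] = {1, …, n}` (modelled as `Fin n`): a collection of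
subsets of `[n]` such that any subset of a member is a member. -/
def IsSimplicialComplex {n : ℕ} (Δ : Set (Finset (Fin n))) : Prop :=
  ∀ F ∈ Δ, ∀ G ⊆ F, G ∈ Δ

/-- `F` is a facet (maximal face) of `Δ`. -/
def IsFacet {n : ℕ} (Δ : Set (Finset (Fin n))) (F : Finset (Fin n)) : Prop :=
  F ∈ Δ ∧ ∀ G ∈ Δ, F ⊆ G → G = F

/-- `Δ` is a matroid: it is a simplicial complex such that for any two facets `F, G`
and any `i ∈ F` there exists `j ∈ G` with `(F \ {i}) ∪ {j}` a facet. -/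
def IsMatroid {n : ℕ} (Δ : Set (Finset (Fin n))) : Prop :=
  IsSimplicialComplex Δ ∧
    ∀ F G : Finset (Fin n), IsFacet Δ F → IsFacet Δ G →
      ∀ i ∈ F, ∃ j ∈ G, IsFacet Δ (insert j (F.erase i))

/-- A `k`-cover of `Δ`: a nonzero function `α : [n] → ℕ` with `∑_{i ∈ F} α i ≥ k`
for every facet `F` of `Δ`. -/
def IsCover {n : ℕ} (Δ : Set (Finset (Fin n))) (k : ℕ) (α : Fin n → ℕ) : Prop :=
  α ≠ 0 ∧ ∀ F : Finset (Fin n), IsFacet Δ F → k ≤ ∑ i ∈ F, α i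

/-- A basic `k`-cover of `Δ`: a `k`-cover `α` such that the only (nonzero) `k`-cover
`β` with `β ≤ α` pointwise is `α` itself. -/
def IsBasicCover {n : ℕ} (Δ : Set (Finset (Fin n))) (k : ℕ) (α : Fin n → ℕ) : Prop :=
  IsCover Δ k α ∧ ∀ β : Fin n → ℕ, (∀ i, β i ≤ α i) → IsCover Δ k β → β = α


section MatroidCoverAux
open Finset
variable {n d k : ℕ} {Δ : Set (Finset (Fin n))}
 {Δ : Set (Finset (Fin n))}

/-- independent sets: subsets of facets -/
def MIndep (Δ : Set (Finset (Fin n))) (I : Finset (Fin n)) : Prop :=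
  ∃ B, IsFacet Δ B ∧ I ⊆ B

theorem exists_facet_between (hΔ : IsMatroid Δ)
    {I F : Finset (Fin n)} (hI : MIndep Δ I) (hF : IsFacet Δ F) :
    ∃ B, IsFacet Δ B ∧ I ⊆ B ∧ B ⊆ I ∪ F := by
  obtain ⟨B0, hB0, hIB0⟩ := hI
  -- strong induction on the size of B \ (I ∪ F)
  suffices h : ∀ m (B : Finset (Fin n)), IsFacet Δ B → I ⊆ B → (B \ (I ∪ F)).card ≤ m →
      ∃ B', IsFacet Δ B' ∧ I ⊆ B' ∧ B' ⊆ I ∪ F by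
    exact h _ B0 hB0 hIB0 le_rfl
  intro m
  induction m with
  | zero =>
    intro B hB hIB hcard
    refine ⟨B, hB, hIB, fun x hx => ?_⟩
    by_contra hxn
    have : x ∈ B \ (I ∪ F) := Finset.mem_sdiff.mpr ⟨hx, hxn⟩
    have := Finset.card_pos.mpr ⟨x, this⟩
    omega
  | succ m ih =>
    intro B hB hIB hcard
    rcases Finset.eq_empty_or_nonempty (B \ (I ∪ F)) with he | ⟨i, hi⟩
    · refine ⟨B, hB, hIB, fun x hx => ?_⟩
      by_contra hxn
      exact Finset.notMem_empty x (he ▸ Finset.mem_sdiff.mpr ⟨hx, hxn⟩)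
    · rw [Finset.mem_sdiff] at hi
      obtain ⟨hiB, hiIF⟩ := hi
      obtain ⟨j, hjF, hB'⟩ := hΔ.2 B F hB hF i hiB
      refine ih (insert j (B.erase i)) hB' ?_ ?_
      · intro x hx
        rcases eq_or_ne x i with rfl | hne
        · exact absurd (Finset.mem_union_left _ hx) hiIF
        · exact Finset.mem_insert_of_mem (Finset.mem_erase.mpr ⟨hne, hIB hx⟩)
      · have hsub : insert j (B.erase i) \ (I ∪ F) ⊆ (B \ (I ∪ F)).erase i := by
          intro x hx
          rw [Finset.mem_sdiff, Finset.mem_insert] at hx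
          obtain ⟨hx1, hx2⟩ := hx
          rcases hx1 with rfl | hx1
          · exact absurd (Finset.mem_union_right _ hjF) hx2
          · rw [Finset.mem_erase] at hx1 ⊢
            exact ⟨hx1.1, Finset.mem_sdiff.mpr ⟨hx1.2, hx2⟩⟩
        have h1 := Finset.card_le_card hsub
        have h2 : ((B \ (I ∪ F)).erase i).card = (B \ (I ∪ F)).card - 1 :=
          Finset.card_erase_of_mem (Finset.mem_sdiff.mpr ⟨hiB, hiIF⟩)
        have h3 : 1 ≤ (B \ (I ∪ F)).card :=
          Finset.card_pos.mpr ⟨i, Finset.mem_sdiff.mpr ⟨hiB, hiIF⟩⟩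
        omega

theorem mindep_aug (hΔ : IsMatroid Δ) (hpure : ∀ F : Finset (Fin n), IsFacet Δ F → F.card = d)
    {I J : Finset (Fin n)} (hI : MIndep Δ I) (hJ : MIndep Δ J) (hcard : I.card < J.card) :
    ∃ x ∈ J, x ∉ I ∧ MIndep Δ (insert x I) := by
  obtain ⟨G, hG, hJG⟩ := hJ
  obtain ⟨B, hB, hIB, hBIG⟩ := exists_facet_between hΔ hI hG
  by_contra hcon
  push_neg at hcon
  have hBsub : B ⊆ I ∪ (G \ J) := by
    intro b hb
    by_cases hbI : b ∈ I
    · exact Finset.mem_union_left _ hbI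
    · have hbG : b ∈ G := by
        rcases Finset.mem_union.mp (hBIG hb) with h | h
        · exact absurd h hbI
        · exact h
      have hbJ : b ∉ J := by
        intro hbJ
        exact absurd ⟨B, hB, Finset.insert_subset hb hIB⟩ (hcon b hbJ hbI)
      exact Finset.mem_union_right _ (Finset.mem_sdiff.mpr ⟨hbG, hbJ⟩)
  have h1 : B.card ≤ I.card + (G \ J).card :=
    (Finset.card_le_card hBsub).trans (Finset.card_union_le _ _)
  have h2 : (G \ J).card = G.card - J.card := Finset.card_sdiff_of_subset hJG
  have h3 : J.card ≤ G.card := Finset.card_le_card hJG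
  have h4 := hpure B hB
  have h5 := hpure G hG
  omega

theorem hall_cond (hΔ : IsMatroid Δ) (hpure : ∀ F : Finset (Fin n), IsFacet Δ F → F.card = d)
    {F G : Finset (Fin n)} (hF : IsFacet Δ F) (hG : IsFacet Δ G)
    {A : Finset (Fin n)} (hA : A ⊆ F) {N : Finset (Fin n)}
    (hN : ∀ j, j ∈ N ↔ j ∈ G ∧ ∃ i ∈ A, IsFacet Δ (insert j (F.erase i))) :
    A.card ≤ N.card := by
  classical
  have hNG : N ⊆ G := fun j hj => ((hN j).mp hj).1
  -- key claim
  have key : ∀ j ∈ G, j ∉ F \ A → MIndep Δ (insert j (F \ A)) → j ∈ N := by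
    intro j hjG hjFA hind
    by_cases hjF : j ∈ F
    · have hjA : j ∈ A := by
        by_contra h
        exact hjFA (Finset.mem_sdiff.mpr ⟨hjF, h⟩)
      refine (hN j).mpr ⟨hjG, j, hjA, ?_⟩
      rw [Finset.insert_erase hjF]
      exact hF
    · obtain ⟨B, hB, hIB, hBsub⟩ := exists_facet_between hΔ hind hF
      have hBsub' : B ⊆ insert j F := by
        intro b hb
        rcases Finset.mem_union.mp (hBsub hb) with h | h
        · rcases Finset.mem_insert.mp h with rfl | h
          · exact Finset.mem_insert_self _ _
          · exact Finset.mem_insert_of_mem (Finset.mem_sdiff.mp h).1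
        · exact Finset.mem_insert_of_mem h
      have hjB : j ∈ B := hIB (Finset.mem_insert_self _ _)
      have hFAB : F \ A ⊆ B := fun x hx => hIB (Finset.mem_insert_of_mem hx)
      have hcardB : B.card = d := hpure B hB
      have hcardF : F.card = d := hpure F hF
      -- F \ B has exactly one element
      have hBF : B.erase j ⊆ F := by
        intro b hb
        rw [Finset.mem_erase] at hb
        rcases Finset.mem_insert.mp (hBsub' hb.2) with h | h
        · exact absurd h hb.1
        · exact h
      have hcard1 : (F \ B).card = 1 := by
        have h1 : (B.erase j).card = d - 1 := by rw [Finset.card_erase_of_mem hjB, hcardB]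
        have h2 : F \ B = F \ B.erase j := by
          ext x
          simp only [Finset.mem_sdiff, Finset.mem_erase]
          constructor
          · rintro ⟨hx1, hx2⟩
            exact ⟨hx1, fun h => hx2 h.2⟩
          · rintro ⟨hx1, hx2⟩
            refine ⟨hx1, fun h => hx2 ⟨?_, h⟩⟩
            rintro rfl
            exact hjF hx1
        have h3 : (F \ B.erase j).card = F.card - (B.erase j).card :=
          Finset.card_sdiff_of_subset hBF
        have hd : 1 ≤ d := by
          have := Finset.card_pos.mpr ⟨j, hjB⟩
          omega
        rw [h2, h3, h1, hcardF]
        omega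
      obtain ⟨i, hi⟩ := Finset.card_eq_one.mp hcard1
      have hiF : i ∈ F := by
        have : i ∈ F \ B := hi ▸ Finset.mem_singleton_self i
        exact (Finset.mem_sdiff.mp this).1
      have hiB : i ∉ B := by
        have : i ∈ F \ B := hi ▸ Finset.mem_singleton_self i
        exact (Finset.mem_sdiff.mp this).2
      have hiA : i ∈ A := by
        by_contra h
        exact hiB (hFAB (Finset.mem_sdiff.mpr ⟨hiF, h⟩))
      have hBeq : B = insert j (F.erase i) := by
        ext x
        simp only [Finset.mem_insert, Finset.mem_erase]
        constructor
        · intro hx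
          rcases Finset.mem_insert.mp (hBsub' hx) with rfl | h
          · exact Or.inl rfl
          · refine Or.inr ⟨?_, h⟩
            rintro rfl
            exact hiB hx
        · rintro (rfl | ⟨hxi, hxF⟩)
          · exact hjB
          · by_contra hxB
            have : x ∈ F \ B := Finset.mem_sdiff.mpr ⟨hxF, hxB⟩
            rw [hi, Finset.mem_singleton] at this
            exact hxi this
      exact (hN j).mpr ⟨hjG, i, hiA, hBeq ▸ hB⟩
  -- now bound |G \ N|
  have hS : (G \ N).card ≤ (F \ A).card := by
    by_contra h
    push_neg at h
    obtain ⟨x, hxS, hxFA, hxind⟩ := mindep_aug hΔ hpure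
      (⟨F, hF, Finset.sdiff_subset⟩ : MIndep Δ (F \ A))
      (⟨G, hG, Finset.sdiff_subset⟩ : MIndep Δ (G \ N)) h
    have hxG : x ∈ G := (Finset.mem_sdiff.mp hxS).1
    have hxN : x ∉ N := (Finset.mem_sdiff.mp hxS).2
    exact hxN (key x hxG hxFA hxind)
  have h1 : (G \ N).card = G.card - N.card := Finset.card_sdiff_of_subset hNG
  have h2 : (F \ A).card = F.card - A.card := Finset.card_sdiff_of_subset hA
  have h3 : N.card ≤ G.card := Finset.card_le_card hNG
  have h4 : A.card ≤ F.card := Finset.card_le_card hA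
  have h5 := hpure F hF
  have h6 := hpure G hG
  omega

theorem exists_matching (hΔ : IsMatroid Δ)
    (hpure : ∀ F : Finset (Fin n), IsFacet Δ F → F.card = d)
    {F G : Finset (Fin n)} (hF : IsFacet Δ F) (hG : IsFacet Δ G) :
    ∃ f : {x // x ∈ F} → Fin n, Function.Injective f ∧
      ∀ i : {x // x ∈ F}, f i ∈ G ∧ IsFacet Δ (insert (f i) (F.erase i.val)) := by
  classical
  set t : {x // x ∈ F} → Finset (Fin n) :=
    fun i => G.filter (fun j => IsFacet Δ (insert j (F.erase i.val))) with ht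
  have hall : ∀ s : Finset {x // x ∈ F}, s.card ≤ (s.biUnion t).card := by
    intro s
    have hinj : ∀ x ∈ s, ∀ y ∈ s, (Subtype.val x) = (Subtype.val y) → x = y :=
      fun x _ y _ h => Subtype.ext h
    have hcard : (s.image Subtype.val).card = s.card := Finset.card_image_of_injOn hinj
    have hAF : s.image Subtype.val ⊆ F := by
      intro x hx
      obtain ⟨y, _, rfl⟩ := Finset.mem_image.mp hx
      exact y.2
    have hNchar : ∀ j, j ∈ s.biUnion t ↔
        j ∈ G ∧ ∃ i ∈ s.image Subtype.val, IsFacet Δ (insert j (F.erase i)) := by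
      intro j
      simp only [Finset.mem_biUnion, ht, Finset.mem_filter, Finset.mem_image]
      constructor
      · rintro ⟨i, his, hjG, hfac⟩
        exact ⟨hjG, i.val, ⟨i, his, rfl⟩, hfac⟩
      · rintro ⟨hjG, i, ⟨i', hi's, rfl⟩, hfac⟩
        exact ⟨i', hi's, hjG, hfac⟩
    calc s.card = (s.image Subtype.val).card := hcard.symm
      _ ≤ (s.biUnion t).card := hall_cond hΔ hpure hF hG hAF hNchar
  obtain ⟨f, hfinj, hft⟩ := (Finset.all_card_le_biUnion_card_iff_existsInjective' t).mp hall
  refine ⟨f, hfinj, fun i => ?_⟩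
  have := hft i
  rw [ht, Finset.mem_filter] at this
  exact this

variable {k : ℕ}

theorem min_is_cover (hΔ : IsMatroid Δ)
    (hpure : ∀ F : Finset (Fin n), IsFacet Δ F → F.card = d) (hk : 1 ≤ k)
    {α β : Fin n → ℕ} (hα : IsCover Δ k α) (hβ : IsCover Δ k β)
    {F : Finset (Fin n)} (hF : IsFacet Δ F) (htight : ∑ i ∈ F, α i = k)
    (heq : ∀ i ∈ F, α i = β i) :
    IsCover Δ k (fun x => min (α x) (β x)) := by
  set γ : Fin n → ℕ := fun x => min (α x) (β x) with hγ
  have hγF : ∀ i ∈ F, γ i = α i := by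
    intro i hi
    simp only [hγ, heq i hi, min_self]
  have hγFsum : ∑ i ∈ F, γ i = k := by
    rw [Finset.sum_congr rfl hγF, htight]
  have hβtight : ∑ i ∈ F, β i = k := by
    rw [← Finset.sum_congr rfl heq, htight]
  constructor
  · intro h0
    have : ∑ i ∈ F, γ i = 0 := by
      rw [show γ = 0 from h0]
      simp
    omega
  · intro G hGfac
    obtain ⟨f, hfinj, hf⟩ := exists_matching hΔ hpure hF hGfac
    have hd1 : 1 ≤ d := by
      have h0 : k ≤ ∑ i ∈ F, α i := hα.2 F hF
      have : F.Nonempty := by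
        rcases Finset.eq_empty_or_nonempty F with rfl | h
        · simp at h0; omega
        · exact h
      have := Finset.card_pos.mpr this
      have := hpure F hF
      omega
    have hstep : ∀ i : {x // x ∈ F}, γ i.val ≤ γ (f i) := by
      intro i
      rcases eq_or_ne (f i) i.val with he | hne
      · rw [he]
      · have hfac' := (hf i).2
        have hfnotF : f i ∉ F := by
          intro hmem
          have : f i ∈ F.erase i.val := Finset.mem_erase.mpr ⟨hne, hmem⟩
          have heqset : insert (f i) (F.erase i.val) = F.erase i.val :=
            Finset.insert_eq_self.mpr this
          have hc := hpure _ hfac'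
          rw [heqset, Finset.card_erase_of_mem i.2, hpure F hF] at hc
          omega
        have hfnotE : f i ∉ F.erase i.val := fun h => hfnotF (Finset.mem_of_mem_erase h)
        have hsumα : α (f i) + ∑ x ∈ F.erase i.val, α x = ∑ x ∈ insert (f i) (F.erase i.val), α x :=
          (Finset.sum_insert hfnotE).symm
        have hsumα' : α i.val + ∑ x ∈ F.erase i.val, α x = ∑ x ∈ F, α x :=
          Finset.add_sum_erase F α i.2
        have hge : k ≤ ∑ x ∈ insert (f i) (F.erase i.val), α x := hα.2 _ hfac'
        have hαle : α i.val ≤ α (f i) := by omega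
        have hsumβ : β (f i) + ∑ x ∈ F.erase i.val, β x = ∑ x ∈ insert (f i) (F.erase i.val), β x :=
          (Finset.sum_insert hfnotE).symm
        have hsumβ' : β i.val + ∑ x ∈ F.erase i.val, β x = ∑ x ∈ F, β x :=
          Finset.add_sum_erase F β i.2
        have hgeβ : k ≤ ∑ x ∈ insert (f i) (F.erase i.val), β x := hβ.2 _ hfac'
        have hβle : β i.val ≤ β (f i) := by omega
        simp only [hγ]
        exact le_min ((min_le_left _ _).trans hαle) ((min_le_right _ _).trans hβle)
    calc k = ∑ i ∈ F, γ i := hγFsum.symm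
      _ = ∑ i ∈ F.attach, γ i.val := (Finset.sum_attach F γ).symm
      _ ≤ ∑ i ∈ F.attach, γ (f i) := Finset.sum_le_sum (fun i _ => hstep i)
      _ = ∑ j ∈ F.attach.image f, γ j :=
          (Finset.sum_image (fun x _ y _ h => hfinj h)).symm
      _ ≤ ∑ j ∈ G, γ j := Finset.sum_le_sum_of_subset (by
          intro j hj
          obtain ⟨i, _, rfl⟩ := Finset.mem_image.mp hj
          exact (hf i).1)

theorem basic_unique (hΔ : IsMatroid Δ)
    (hpure : ∀ F : Finset (Fin n), IsFacet Δ F → F.card = d) (hk : 1 ≤ k)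
    {α β : Fin n → ℕ} (hα : IsBasicCover Δ k α) (hβ : IsBasicCover Δ k β)
    {F : Finset (Fin n)} (hF : IsFacet Δ F) (htight : ∑ i ∈ F, α i = k)
    (heq : ∀ i ∈ F, α i = β i) : α = β := by
  have hγ := min_is_cover hΔ hpure hk hα.1 hβ.1 hF htight heq
  have h1 : (fun x => min (α x) (β x)) = α := hα.2 _ (fun i => min_le_left _ _) hγ
  have h2 : (fun x => min (α x) (β x)) = β := hβ.2 _ (fun i => min_le_right _ _) hγ
  rw [← h1, h2]

theorem exists_tight_facet (hdim : ∃ F : Finset (Fin n), IsFacet Δ F) (hk : 1 ≤ k)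
    {α : Fin n → ℕ} (hα : IsBasicCover Δ k α) :
    ∃ F, IsFacet Δ F ∧ ∑ i ∈ F, α i = k := by
  classical
  obtain ⟨i0, hi0⟩ : ∃ i0, α i0 ≠ 0 := by
    by_contra h
    push_neg at h
    exact hα.1.1 (funext fun i => h i)
  -- some facet contains i0
  have hfacet_i0 : ∃ F, IsFacet Δ F ∧ i0 ∈ F := by
    by_contra h
    push_neg at h
    set β := Function.update α i0 0 with hβ
    have hsum : ∀ F, IsFacet Δ F → ∑ i ∈ F, β i = ∑ i ∈ F, α i := by
      intro F hF
      refine Finset.sum_congr rfl fun x hx => ?_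
      have : x ≠ i0 := by rintro rfl; exact h F hF hx
      simp [hβ, Function.update_of_ne this]
    have hβne : β ≠ 0 := by
      intro h0
      obtain ⟨F0, hF0⟩ := hdim
      have hc := hα.1.2 F0 hF0
      have : ∑ i ∈ F0, α i = 0 := by
        rw [← hsum F0 hF0, h0]
        simp
      omega
    have hcover : IsCover Δ k β := ⟨hβne, fun F hF => (hsum F hF).symm ▸ hα.1.2 F hF⟩
    have hle : ∀ i, β i ≤ α i := by
      intro i
      rcases eq_or_ne i i0 with rfl | hne
      · simp [hβ]
      · simp [hβ, Function.update_of_ne hne]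
    have := hα.2 β hle hcover
    have : β i0 = α i0 := congrFun this i0
    simp [hβ] at this
    exact hi0 this.symm
  by_contra hcon
  push_neg at hcon
  have hgt : ∀ F, IsFacet Δ F → k + 1 ≤ ∑ i ∈ F, α i := by
    intro F hF
    have h1 := hα.1.2 F hF
    have h2 := hcon F hF
    omega
  set β := Function.update α i0 (α i0 - 1) with hβ
  have hβeq : ∀ x, x ≠ i0 → β x = α x := fun x hx => Function.update_of_ne hx _ _
  have hβi0 : β i0 = α i0 - 1 := Function.update_self _ _ _
  have hsum : ∀ F, IsFacet Δ F → k ≤ ∑ i ∈ F, β i := by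
    intro F hF
    by_cases hi0F : i0 ∈ F
    · have e1 : β i0 + ∑ x ∈ F.erase i0, β x = ∑ x ∈ F, β x := Finset.add_sum_erase F β hi0F
      have e2 : α i0 + ∑ x ∈ F.erase i0, α x = ∑ x ∈ F, α x := Finset.add_sum_erase F α hi0F
      have e3 : ∑ x ∈ F.erase i0, β x = ∑ x ∈ F.erase i0, α x :=
        Finset.sum_congr rfl fun x hx => hβeq x (Finset.ne_of_mem_erase hx)
      have := hgt F hF
      omega
    · have e3 : ∑ x ∈ F, β x = ∑ x ∈ F, α x :=
        Finset.sum_congr rfl fun x hx => hβeq x (by rintro rfl; exact hi0F hx)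
      rw [e3]; exact hα.1.2 F hF
  have hβne : β ≠ 0 := by
    intro h0
    obtain ⟨F1, hF1, hi0F1⟩ := hfacet_i0
    have hα1 : α i0 = 1 := by
      have : β i0 = 0 := by rw [h0]; rfl
      omega
    have hrest : ∀ x ∈ F1.erase i0, α x = 0 := by
      intro x hx
      have hne := Finset.ne_of_mem_erase hx
      have : β x = 0 := by rw [h0]; rfl
      rw [hβeq x hne] at this
      exact this
    have e2 : α i0 + ∑ x ∈ F1.erase i0, α x = ∑ x ∈ F1, α x := Finset.add_sum_erase F1 α hi0F1
    have : ∑ x ∈ F1.erase i0, α x = 0 := Finset.sum_eq_zero hrest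
    have := hgt F1 hF1
    omega
  have hle : ∀ i, β i ≤ α i := by
    intro i
    rcases eq_or_ne i i0 with rfl | hne
    · omega
    · rw [hβeq i hne]
  have := hα.2 β hle ⟨hβne, hsum⟩
  have : β i0 = α i0 := congrFun this i0
  omega


theorem multiset_card_finset_sum {ι β : Type*} (s : Finset ι) (f : ι → Multiset β) :
    Multiset.card (∑ i ∈ s, f i) = ∑ i ∈ s, Multiset.card (f i) := by
  classical
  induction s using Finset.induction_on with
  | empty => simp
  | insert _ _ h ih => rw [Finset.sum_insert h, Finset.sum_insert h, Multiset.card_add, ih]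

theorem card_tuples_le (d k : ℕ) (hd : 1 ≤ d) :
    Nat.card {g : Fin d → ℕ // ∑ t, g t = k} ≤ (k + d - 1).choose (d - 1) := by
  classical
  have heq : (d + k - 1).choose k = (k + d - 1).choose (d - 1) := by
    have h3 := Nat.choose_symm (show d - 1 ≤ k + d - 1 by omega)
    rw [show k + d - 1 - (d - 1) = k from by omega] at h3
    rw [show d + k - 1 = k + d - 1 from by omega]
    exact h3
  have hinj : Function.Injective
      (fun g : {g : Fin d → ℕ // ∑ t, g t = k} =>
        (⟨∑ t : Fin d, Multiset.replicate (g.1 t) t, by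
          rw [multiset_card_finset_sum]
          simp only [Multiset.card_replicate]
          exact g.2⟩ : Sym (Fin d) k)) := by
    intro a b h
    have hm : (∑ t : Fin d, Multiset.replicate (a.1 t) t) =
        (∑ t : Fin d, Multiset.replicate (b.1 t) t) := congrArg Subtype.val h
    ext t
    have hca := congrArg (Multiset.count t) hm
    rw [Multiset.count_sum', Multiset.count_sum'] at hca
    simp only [Multiset.count_replicate] at hca
    simpa using hca
  haveI : Finite {s : Multiset (Fin d) // Multiset.card s = k} :=
    Finite.of_equiv (Sym (Fin d) k) (Equiv.refl _)
  have hle := Nat.card_le_card_of_injective _ hinj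
  have hcard : Nat.card {s : Multiset (Fin d) // Multiset.card s = k} = (d + k - 1).choose k := by
    show Nat.card (Sym (Fin d) k) = (d + k - 1).choose k
    rw [Nat.card_eq_fintype_card, Sym.card_sym_eq_choose, Fintype.card_fin]
  exact le_of_le_of_eq (le_of_le_of_eq hle hcard) heq





theorem aux_orderIso_symm_congr (s t : Finset (Fin n)) (hst : s = t)
    (hs : s.card = d) (ht : t.card = d) (x : Fin n) (hx : x ∈ s) (hx' : x ∈ t) :
    (s.orderIsoOfFin hs).symm ⟨x, hx⟩ = (t.orderIsoOfFin ht).symm ⟨x, hx'⟩ := by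
  subst hst; rfl

theorem aux_no_basic_of_d0 (hpure : ∀ F : Finset (Fin n), IsFacet Δ F → F.card = d)
    (hdim : ∃ F : Finset (Fin n), IsFacet Δ F) (hk : 1 ≤ k) (hd : d = 0) :
    IsEmpty {α : Fin n → ℕ // IsBasicCover Δ k α} := by
  refine ⟨fun a => ?_⟩
  obtain ⟨F0, hF0⟩ := hdim
  have hF0e : F0 = ∅ := Finset.card_eq_zero.mp (by rw [hpure F0 hF0, hd])
  have := a.2.1.2 F0 hF0
  rw [hF0e] at this
  simp at this
  omega

theorem aux_facets_card_le (hpure : ∀ F : Finset (Fin n), IsFacet Δ F → F.card = d) :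
    Nat.card {F : Finset (Fin n) // IsFacet Δ F} ≤ n.choose d := by
  classical
  have hinj : Function.Injective (fun F : {F : Finset (Fin n) // IsFacet Δ F} =>
      (⟨F.1, Finset.mem_powersetCard.mpr ⟨Finset.subset_univ _, hpure _ F.2⟩⟩ :
        {s : Finset (Fin n) // s ∈ Finset.powersetCard d (Finset.univ : Finset (Fin n))})) :=
    fun a b h => Subtype.ext
      (congrArg (fun x : {s : Finset (Fin n) // s ∈ Finset.powersetCard d (Finset.univ : Finset (Fin n))} => x.1) h)
  have hle := Nat.card_le_card_of_injective _ hinj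
  have h2 : Nat.card {s : Finset (Fin n) // s ∈ Finset.powersetCard d (Finset.univ : Finset (Fin n))}
      = n.choose d := by
    rw [Nat.card_eq_fintype_card, Fintype.card_coe, Finset.card_powersetCard,
      Finset.card_univ, Fintype.card_fin]
  exact le_of_le_of_eq hle h2



theorem aux_main_count (hΔ : IsMatroid Δ)
    (hpure : ∀ F : Finset (Fin n), IsFacet Δ F → F.card = d)
    (hdim : ∃ F : Finset (Fin n), IsFacet Δ F) (hk : 1 ≤ k) :
    Nat.card {α : Fin n → ℕ // IsBasicCover Δ k α} ≤
      Nat.card {F : Finset (Fin n) // IsFacet Δ F} * (k + d - 1).choose (d - 1) := by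
  classical
  by_cases hd : d = 0
  · haveI := aux_no_basic_of_d0 hpure hdim hk hd
    rw [Nat.card_of_isEmpty]
    exact Nat.zero_le _
  · have hd1 : 1 ≤ d := by omega
    haveI hfing : Finite {g : Fin d → ℕ // ∑ t, g t = k} := by
      refine Finite.of_injective
        (fun g : {g : Fin d → ℕ // ∑ t, g t = k} =>
          fun t => (⟨g.1 t, ?_⟩ : Fin (k+1))) ?_
      · have h1 : g.1 t ≤ ∑ s, g.1 s :=
          Finset.single_le_sum (fun s _ => Nat.zero_le _) (Finset.mem_univ t)
        exact Nat.lt_succ_of_le (le_of_le_of_eq h1 g.2)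
      · intro a b h
        apply Subtype.ext; funext t
        exact congrArg Fin.val (congrFun h t)
    have hexists : ∀ a : {α : Fin n → ℕ // IsBasicCover Δ k α},
        ∃ F, IsFacet Δ F ∧ ∑ i ∈ F, a.1 i = k :=
      fun a => exists_tight_facet hdim hk a.2
    set Fc : {α : Fin n → ℕ // IsBasicCover Δ k α} → Finset (Fin n) :=
      fun a => (hexists a).choose with hFcdef
    have hFc : ∀ a, IsFacet Δ (Fc a) ∧ ∑ i ∈ Fc a, a.1 i = k :=
      fun a => (hexists a).choose_spec
    have hcard : ∀ a, (Fc a).card = d := fun a => hpure _ (hFc a).1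
    set Φ : {α : Fin n → ℕ // IsBasicCover Δ k α} →
        {F : Finset (Fin n) // IsFacet Δ F} × {g : Fin d → ℕ // ∑ t, g t = k} :=
      fun a => ⟨⟨Fc a, (hFc a).1⟩,
        ⟨fun t => a.1 (((Fc a).orderIsoOfFin (hcard a)) t), by
          calc ∑ t : Fin d, a.1 (((Fc a).orderIsoOfFin (hcard a)) t)
              = ∑ x : {x // x ∈ Fc a}, a.1 x :=
                Fintype.sum_equiv ((Fc a).orderIsoOfFin (hcard a)).toEquiv
                  (fun t => a.1 (((Fc a).orderIsoOfFin (hcard a)) t)) (fun x => a.1 x)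
                  (fun t => rfl)
            _ = ∑ i ∈ Fc a, a.1 i := Finset.sum_coe_sort _ _
            _ = k := (hFc a).2⟩⟩ with hΦdef
    have hΦinj : Function.Injective Φ := by
      intro a b h
      have h1 : Fc a = Fc b := congrArg (fun p => p.1.1) h
      have h2 : (fun t => a.1 (((Fc a).orderIsoOfFin (hcard a)) t)) =
          (fun t => b.1 (((Fc b).orderIsoOfFin (hcard b)) t)) :=
        congrArg (fun p => p.2.1) h
      have heqF : ∀ x ∈ Fc a, a.1 x = b.1 x := by
        intro x hx
        have hx' : x ∈ Fc b := h1 ▸ hx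
        have e3 : ((Fc a).orderIsoOfFin (hcard a)).symm ⟨x, hx⟩ =
            ((Fc b).orderIsoOfFin (hcard b)).symm ⟨x, hx'⟩ :=
          aux_orderIso_symm_congr _ _ h1 _ _ x hx hx'
        calc a.1 x
            = a.1 (((Fc a).orderIsoOfFin (hcard a))
                (((Fc a).orderIsoOfFin (hcard a)).symm ⟨x, hx⟩)) := by
              rw [OrderIso.apply_symm_apply]
          _ = b.1 (((Fc b).orderIsoOfFin (hcard b))
                (((Fc a).orderIsoOfFin (hcard a)).symm ⟨x, hx⟩)) :=
              congrFun h2 _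
          _ = b.1 (((Fc b).orderIsoOfFin (hcard b))
                (((Fc b).orderIsoOfFin (hcard b)).symm ⟨x, hx'⟩)) := by rw [e3]
          _ = b.1 x := by rw [OrderIso.apply_symm_apply]
      exact Subtype.ext (basic_unique hΔ hpure hk a.2 b.2 (hFc a).1 (hFc a).2 heqF)
    calc Nat.card {α : Fin n → ℕ // IsBasicCover Δ k α}
        ≤ Nat.card ({F : Finset (Fin n) // IsFacet Δ F} ×
            {g : Fin d → ℕ // ∑ t, g t = k}) :=
          Nat.card_le_card_of_injective Φ hΦinj
      _ = Nat.card {F : Finset (Fin n) // IsFacet Δ F} *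
            Nat.card {g : Fin d → ℕ // ∑ t, g t = k} := Nat.card_prod _ _
      _ ≤ Nat.card {F : Finset (Fin n) // IsFacet Δ F} * (k + d - 1).choose (d - 1) :=
          Nat.mul_le_mul_left _ (card_tuples_le d k hd1)


end MatroidCoverAux

/-- **From the proof of Theorem 2.1 (if-part).** Let `Δ` be a `(d-1)`-dimensional matroid
on `[n]` (so every facet has `d` elements).  Then for every `k ≥ 1` the number of basic
`k`-covers of `Δ` is at most `|F(Δ)| ⬝ C(k+d-1, d-1) ≤ C(n,d) ⬝ C(k+d-1, d-1)`;
in particular it is `O(k^{d-1})`. -/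
theorem card_basicCovers_le_of_matroid (n d : ℕ) (Δ : Set (Finset (Fin n)))
    (hΔ : IsMatroid Δ) (hpure : ∀ F : Finset (Fin n), IsFacet Δ F → F.card = d)
    (hdim : ∃ F : Finset (Fin n), IsFacet Δ F) :
    (∀ k : ℕ, 1 ≤ k →
      Nat.card {α : Fin n → ℕ // IsBasicCover Δ k α} ≤
        Nat.card {F : Finset (Fin n) // IsFacet Δ F} * Nat.choose (k + d - 1) (d - 1) ∧
      Nat.card {F : Finset (Fin n) // IsFacet Δ F} * Nat.choose (k + d - 1) (d - 1) ≤
        Nat.choose n d * Nat.choose (k + d - 1) (d - 1)) ∧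
    ∃ lam : ℝ, 0 < lam ∧ ∀ᶠ k : ℕ in atTop,
      (Nat.card {α : Fin n → ℕ // IsBasicCover Δ k α} : ℝ) ≤
        lam * (k : ℝ) ^ ((d : ℤ) - 1) := by
  constructor
  · intro k hk
    exact ⟨aux_main_count hΔ hpure hdim hk,
      Nat.mul_le_mul_right _ (aux_facets_card_le hpure)⟩
  · refine ⟨((n.choose d * d ^ (d - 1) : ℕ) : ℝ) + 1, by positivity, ?_⟩
    filter_upwards [Filter.eventually_ge_atTop 1] with k hk
    by_cases hd : d = 0
    · haveI := aux_no_basic_of_d0 hpure hdim hk hd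
      rw [Nat.card_of_isEmpty]
      have hk0 : (0:ℝ) < (k:ℝ) := by exact_mod_cast hk
      have hz : (0:ℝ) ≤ (((n.choose d * d ^ (d - 1) : ℕ) : ℝ) + 1) * (k:ℝ) ^ ((d:ℤ) - 1) :=
        mul_nonneg (by positivity) (zpow_nonneg hk0.le _)
      simpa using hz
    · have hd1 : 1 ≤ d := by omega
      have h1 := le_trans (aux_main_count hΔ hpure hdim hk)
        (Nat.mul_le_mul_right _ (aux_facets_card_le hpure))
      have hbase : k + d - 1 ≤ d * k := by
        calc k + d - 1 = (k - 1) + d := by omega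
          _ ≤ d * (k - 1) + d := Nat.add_le_add_right (Nat.le_mul_of_pos_left _ (by omega)) d
          _ = d * k := by rw [← Nat.mul_succ]; congr 1; omega
      have h2 : (k + d - 1).choose (d - 1) ≤ (d * k) ^ (d - 1) :=
        le_trans (Nat.choose_le_pow _ _) (Nat.pow_le_pow_left hbase _)
      have h3 : Nat.card {α : Fin n → ℕ // IsBasicCover Δ k α} ≤
          n.choose d * d ^ (d - 1) * k ^ (d - 1) := by
        calc Nat.card {α : Fin n → ℕ // IsBasicCover Δ k α}
            ≤ n.choose d * (k + d - 1).choose (d - 1) := h1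
          _ ≤ n.choose d * (d * k) ^ (d - 1) := Nat.mul_le_mul_left _ h2
          _ = n.choose d * d ^ (d - 1) * k ^ (d - 1) := by rw [mul_pow, mul_assoc]
      have hzpow : (k:ℝ) ^ ((d:ℤ) - 1) = (k:ℝ) ^ ((d - 1 : ℕ)) := by
        rw [show (d:ℤ) - 1 = ((d - 1 : ℕ) : ℤ) by omega, zpow_natCast]
      rw [hzpow]
      calc (Nat.card {α : Fin n → ℕ // IsBasicCover Δ k α} : ℝ)
          ≤ ((n.choose d * d ^ (d - 1) * k ^ (d - 1) : ℕ) : ℝ) := Nat.cast_le.mpr h3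
        _ = ((n.choose d * d ^ (d - 1) : ℕ) : ℝ) * (k:ℝ) ^ ((d - 1 : ℕ)) := by push_cast; ring
        _ ≤ (((n.choose d * d ^ (d - 1) : ℕ) : ℝ) + 1) * (k:ℝ) ^ ((d - 1 : ℕ)) :=
            mul_le_mul_of_nonneg_right (by linarith) (by positivity)
end

section
/- Let $\Delta$ be a $(d-1)$-dimensional simplicial complex on $[n]$ whose facets all have $d$ elements, and suppose $\Delta$ is not a matroid. Choose facets $F=\{i_1,\ldots,i_d\}$ (with $i_1=i$) and $G$ and a vertex $i\in F$ such that $(F\setminus\{i\})\cup\{j\}$ is not a facet for any $j\in G$; let $s$ be the greatest integer such that some $s$-dimensional subface $F_0=\{i_{d-s},\ldots,i_d\}$ of $F\setminus\{i\}$ unions with some $(d-s-2)$-dimensional subface $G_0=\{j_1,\ldots,j_{d-s-1}\}$ of $G$ to give a facet of $\Delta$ (so $-1\leq s\leq d-3$). For any tuple $(a_1,\ldots,a_d,b_1,\ldots,b_{d-s-1})$ of nonnegative integers with $a_1+\cdots+a_d=k$, $a_1+\cdots+a_{d-s-1}=b_1+\cdots+b_{d-s-1}$, $a_1\geq a_2\geq\cdots\geq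 a_d$, and all $b_q\geq a_2$, the function $\alpha':[n]\to\mathbb{N}$ defined by $\alpha'(i_p)=a_p$, $\alpha'(j_q)=b_q$ for $q<d-s$, and $\alpha'(v)=k$ otherwise, is a $k$-cover of $\Delta$. -/
open MvPolynomial Filter

lemma strictMono_fin_le {m d : ℕ} {g : Fin m → Fin d} (hg : StrictMono g) :
    ∀ r : Fin m, (r : ℕ) ≤ (g r : ℕ) := by
  have key : ∀ v (hv : v < m), v ≤ (g ⟨v, hv⟩ : ℕ) := by
    intro v
    induction v with
    | zero => intro hv; exact Nat.zero_le _
    | succ v ih =>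
      intro hv
      have hv' : v < m := Nat.lt_of_succ_lt hv
      have h1 : (⟨v, hv'⟩ : Fin m) < ⟨v + 1, hv⟩ := by
        rw [Fin.lt_def]; exact Nat.lt_succ_self v
      have h2 : (g ⟨v, hv'⟩ : ℕ) < (g ⟨v + 1, hv⟩ : ℕ) := hg h1
      have h3 := ih hv'
      omega
  intro r
  have := key r.val r.isLt
  simpa using this

lemma strictMono_fin_ub {m d : ℕ} {g : Fin m → Fin d} (hg : StrictMono g) :
    ∀ r : Fin m, (g r : ℕ) ≤ d - m + r := by
  intro r
  have hrev : StrictMono (fun r : Fin m => (g r.rev).rev) := by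
    intro x y hxy
    simp only [Fin.rev_lt_rev]
    exact hg (by simpa [Fin.rev_lt_rev] using hxy)
  have := strictMono_fin_le hrev r.rev
  simp only [Fin.rev_rev] at this
  have h1 : (r.rev : ℕ) = m - 1 - (r : ℕ) := by
    simp [Fin.rev]; omega
  have h2 : ((g r).rev : ℕ) = d - 1 - (g r : ℕ) := by
    simp [Fin.rev]; omega
  have hr := r.isLt
  have hgr := (g r).isLt
  omega

lemma antitone_sum_top {d : ℕ} (a : Fin d → ℕ)
    (hmono : ∀ p p' : Fin d, p ≤ p' → a p' ≤ a p) (P : Finset (Fin d)) :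
    ∑ p ∈ Finset.univ.filter (fun p : Fin d => d - P.card ≤ (p : ℕ)), a p
      ≤ ∑ p ∈ P, a p := by
  set m := P.card with hm
  have hmd : m ≤ d := by
    have := P.card_le_univ
    simpa using this
  let g : Fin m ↪o Fin d := P.orderEmbOfFin rfl
  have himg : Finset.image g Finset.univ = P := by
    ext p
    simp only [Finset.mem_image, Finset.mem_univ, true_and]
    constructor
    · rintro ⟨r, rfl⟩; exact P.orderEmbOfFin_mem rfl r
    · intro hp
      have : p ∈ Set.range (P.orderEmbOfFin rfl) := by
        rw [Finset.range_orderEmbOfFin]; exact hp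
      obtain ⟨r, hr⟩ := this
      exact ⟨r, hr⟩
  have hrhs : ∑ p ∈ P, a p = ∑ r : Fin m, a (g r) := by
    rw [← himg, Finset.sum_image (fun x _ y _ h => g.injective h)]
  let E : Fin m → Fin d := fun r => ⟨d - m + (r : ℕ), by have := r.isLt; omega⟩
  have hEimg : Finset.univ.filter (fun p : Fin d => d - m ≤ (p : ℕ))
      = Finset.image E Finset.univ := by
    ext p
    simp only [Finset.mem_filter, Finset.mem_univ, true_and, Finset.mem_image]
    constructor
    · intro hp
      refine ⟨⟨(p : ℕ) - (d - m), by have := p.isLt; omega⟩, ?_⟩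
      apply Fin.ext; simp [E]; have := p.isLt; omega
    · rintro ⟨r, rfl⟩; simp [E]
  have hEinj : Function.Injective E := by
    intro x y h
    apply Fin.ext
    have := congrArg Fin.val h
    simp [E] at this
    omega
  rw [hEimg, Finset.sum_image (fun x _ y _ h => hEinj h), hrhs]
  apply Finset.sum_le_sum
  intro r _
  apply hmono
  rw [Fin.le_def]
  have := strictMono_fin_ub g.strictMono r
  simp only [E]
  omega

set_option maxHeartbeats 1000000 in
lemma cover_aux (n : ℕ) (Δ : Set (Finset (Fin n))) (d : ℕ)
    (hpure : ∀ H : Finset (Fin n), IsFacet Δ H → H.card = d)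
    (s : ℤ) (hs : -1 ≤ s) (hsd : s ≤ (d : ℤ) - 3)
    (iv jv : Fin d → Fin n) (hiv : Function.Injective iv) (hjv : Function.Injective jv)
    (F G : Finset (Fin n))
    (hFiv : F = Finset.image iv Finset.univ) (hGjv : G = Finset.image jv Finset.univ)
    (i : Fin n) (hi : i = iv ⟨0, Nat.pos_of_ne_zero (by omega)⟩)
    (G₀ : Finset (Fin n))
    (hG₀ : G₀ = Finset.image jv {q : Fin d | (q : ℤ) < (d : ℤ) - s - 1})
    (hmax : ∀ F' ⊆ F.erase i, ∀ G' ⊆ G, IsFacet Δ (F' ∪ G') → (F'.card : ℤ) ≤ s + 1)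
    (k : ℕ) (hk : 1 ≤ k)
    (t : ℕ) (htZ : (t : ℤ) = (d : ℤ) - s - 1) (htd : t ≤ d) (hd1 : 1 < d)
    (a : Fin d → ℕ) (b : Fin t → ℕ)
    (hsum : ∑ p, a p = k)
    (hab : ∑ q : Fin t, a (Fin.castLE htd q) = ∑ q, b q)
    (hmono : ∀ p p' : Fin d, p ≤ p' → a p' ≤ a p)
    (hb : ∀ q, a ⟨1, hd1⟩ ≤ b q)
    (α : Fin n → ℕ)
    (hα1 : ∀ p : Fin d, α (iv p) = a p)
    (hα2 : ∀ q : Fin t, α (jv (Fin.castLE htd q)) = b q)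
    (hα3 : ∀ v : Fin n, v ∉ F ∪ G₀ → α v = k) :
    IsCover Δ k α := by
  have hd2 : 2 ≤ d := by omega
  have ht2 : 2 ≤ t := by omega
  have hd0 : (0 : ℕ) < d := by omega
  -- value of α on G₀
  have hG₀val : ∀ v ∈ G₀, ∃ q : Fin t, v = jv (Fin.castLE htd q) ∧ α v = b q := by
    intro v hv
    rw [hG₀] at hv
    simp only [Finset.mem_image] at hv
    obtain ⟨q, hq, rfl⟩ := hv
    have hqt : (q : ℕ) < t := by
      simp only [Finset.mem_filter] at hq
      omega
    exact ⟨⟨(q : ℕ), hqt⟩, rfl, hα2 ⟨(q : ℕ), hqt⟩⟩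
  -- `a 0` is positive
  have ha0 : 0 < a ⟨0, hd0⟩ := by
    by_contra h
    push_neg at h
    have hz : ∀ p : Fin d, a p = 0 := by
      intro p
      have := hmono ⟨0, hd0⟩ p (by rw [Fin.le_def]; exact Nat.zero_le _)
      omega
    have : ∑ p, a p = 0 := Finset.sum_eq_zero fun p _ => hz p
    omega
  constructor
  · intro h0
    have : α (iv ⟨0, hd0⟩) = 0 := by rw [h0]; rfl
    rw [hα1] at this
    omega
  · intro H hH
    have hHcard : H.card = d := hpure H hH
    by_cases hout : ∀ v ∈ H, v ∈ F ∪ G₀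
    swap
    · push_neg at hout
      obtain ⟨v, hvH, hv⟩ := hout
      calc k = α v := (hα3 v hv).symm
        _ ≤ ∑ w ∈ H, α w := Finset.single_le_sum (fun _ _ => Nat.zero_le _) hvH
    · -- H ⊆ F ∪ G₀
      set P : Finset (Fin d) := Finset.univ.filter (fun p => iv p ∈ H) with hP
      have himg : H ∩ F = Finset.image iv P := by
        ext v
        simp only [Finset.mem_inter, Finset.mem_image, hP, Finset.mem_filter,
          Finset.mem_univ, true_and]
        constructor
        · rintro ⟨hvH, hvF⟩
          rw [hFiv] at hvF
          simp only [Finset.mem_image, Finset.mem_univ, true_and] at hvF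
          obtain ⟨p, rfl⟩ := hvF
          exact ⟨p, hvH, rfl⟩
        · rintro ⟨p, hp, rfl⟩
          refine ⟨hp, ?_⟩
          rw [hFiv]
          exact Finset.mem_image_of_mem iv (Finset.mem_univ p)
      have hsumF : ∑ v ∈ H ∩ F, α v = ∑ p ∈ P, a p := by
        rw [himg, Finset.sum_image (fun x _ y _ h => hiv h)]
        exact Finset.sum_congr rfl fun p _ => hα1 p
      have hcardF : (H ∩ F).card = P.card := by
        rw [himg, Finset.card_image_of_injective _ hiv]
      have hGsub : H \ F ⊆ G₀ := by
        intro v hv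
        simp only [Finset.mem_sdiff] at hv
        have := hout v hv.1
        simp only [Finset.mem_union] at this
        tauto
      have hdisj : Disjoint (H ∩ F) (H \ F) :=
        Finset.disjoint_left.mpr (fun v hv hv' => by
          simp only [Finset.mem_inter] at hv
          simp only [Finset.mem_sdiff] at hv'
          exact hv'.2 hv.2)
      have hUnion : (H ∩ F) ∪ (H \ F) = H := by
        ext v
        simp only [Finset.mem_union, Finset.mem_inter, Finset.mem_sdiff]
        tauto
      have hsplit : ∑ v ∈ H, α v = ∑ v ∈ H ∩ F, α v + ∑ v ∈ H \ F, α v := by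
        have h' := Finset.sum_union (f := α) hdisj
        rw [hUnion] at h'
        exact h'
      have hcards : (H ∩ F).card + (H \ F).card = d := by
        have h' := Finset.card_union_of_disjoint hdisj
        rw [hUnion, hHcard] at h'
        omega
      have hksplit : ∑ p ∈ P, a p
          + ∑ p ∈ Finset.univ.filter (fun p => ¬ iv p ∈ H), a p = k := by
        have h := Finset.sum_filter_add_sum_filter_not Finset.univ (fun p => iv p ∈ H) a
        rw [hsum] at h
        exact h
      have hcc : P.card + (Finset.univ.filter (fun p => ¬ iv p ∈ H)).card = d := by
        have h := Finset.card_filter_add_card_filter_not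
          (s := (Finset.univ : Finset (Fin d))) (p := fun p => iv p ∈ H)
        rw [Finset.card_univ, Fintype.card_fin] at h
        exact h
      by_cases hiH : i ∈ H
      · -- case i ∈ H
        have h0P : (⟨0, hd0⟩ : Fin d) ∈ P := by
          simp only [hP, Finset.mem_filter, Finset.mem_univ, true_and, ← hi]
          exact hiH
        have hNle : ∑ p ∈ Finset.univ.filter (fun p => ¬ iv p ∈ H), a p
            ≤ (Finset.univ.filter (fun p => ¬ iv p ∈ H)).card * a ⟨1, hd1⟩ := by
          rw [← smul_eq_mul]
          apply Finset.sum_le_card_nsmul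
          intro p hp
          simp only [Finset.mem_filter, Finset.mem_univ, true_and] at hp
          apply hmono
          rw [Fin.le_def]
          have hne : p ≠ ⟨0, hd0⟩ := by
            rintro rfl
            rw [← hi] at hp
            exact hp hiH
          have hne' : (p : ℕ) ≠ 0 := fun h => hne (Fin.ext h)
          show 1 ≤ (p : ℕ)
          omega
        have hGge : (H \ F).card * a ⟨1, hd1⟩ ≤ ∑ v ∈ H \ F, α v := by
          rw [← smul_eq_mul]
          apply Finset.card_nsmul_le_sum
          intro v hv
          obtain ⟨q, rfl, hval⟩ := hG₀val v (hGsub hv)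
          rw [hval]
          exact hb q
        have hcardeq : (Finset.univ.filter (fun p => ¬ iv p ∈ H)).card = (H \ F).card := by
          omega
        calc k = ∑ p ∈ P, a p
              + ∑ p ∈ Finset.univ.filter (fun p => ¬ iv p ∈ H), a p := hksplit.symm
          _ ≤ ∑ p ∈ P, a p + (H \ F).card * a ⟨1, hd1⟩ :=
              Nat.add_le_add_left (hcardeq ▸ hNle) _
          _ ≤ ∑ p ∈ P, a p + ∑ v ∈ H \ F, α v := Nat.add_le_add_left hGge _
          _ = ∑ v ∈ H, α v := by rw [hsplit, hsumF]
      · -- case i ∉ H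
        have hF'sub : H ∩ F ⊆ F.erase i := by
          intro v hv
          simp only [Finset.mem_inter] at hv
          rw [Finset.mem_erase]
          exact ⟨fun h => hiH (h ▸ hv.1), hv.2⟩
        have hG₀G : G₀ ⊆ G := by
          rw [hG₀, hGjv]
          exact Finset.image_subset_image (Finset.subset_univ _)
        have hG'G : H \ F ⊆ G := fun v hv => hG₀G (hGsub hv)
        have hFacetHU : IsFacet Δ ((H ∩ F) ∪ (H \ F)) := by rwa [hUnion]
        have hcF' : ((H ∩ F).card : ℤ) ≤ s + 1 := hmax _ hF'sub _ hG'G hFacetHU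
        -- card of G₀
        have hSimg : ({q : Fin d | (q : ℤ) < (d : ℤ) - s - 1} : Finset (Fin d))
            = Finset.image (Fin.castLE htd) Finset.univ := by
          ext q
          simp only [Finset.mem_filter, Finset.mem_univ, true_and, Finset.mem_image]
          constructor
          · intro hq
            have hqt : (q : ℕ) < t := by omega
            exact ⟨⟨(q : ℕ), hqt⟩, Fin.ext rfl⟩
          · rintro ⟨r, -, rfl⟩
            have : (r : ℕ) < t := r.isLt
            simp only [Fin.coe_castLE]
            omega
        have hG₀card : G₀.card = t := by
          rw [hG₀, Finset.card_image_of_injective _ hjv, hSimg,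
            Finset.card_image_of_injective _ (Fin.strictMono_castLE htd).injective,
            Finset.card_univ, Fintype.card_fin]
        have hG'card : (H \ F).card ≤ t := hG₀card ▸ Finset.card_le_card hGsub
        have hG'eq : H \ F = G₀ := by
          apply Finset.eq_of_subset_of_card_le hGsub
          rw [hG₀card]
          omega
        have hPcard : P.card = d - t := by omega
        -- sum over G₀
        have hsumG : ∑ v ∈ H \ F, α v
            = ∑ p ∈ Finset.univ.filter (fun p : Fin d => (p : ℕ) < t), a p := by
          rw [hG'eq, hG₀]
          rw [show ({q : Fin d | (q : ℤ) < (d : ℤ) - s - 1} : Finset (Fin d))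
            = Finset.univ.filter (fun p : Fin d => (p : ℕ) < t) by
              ext q; simp only [Finset.mem_filter, Finset.mem_univ, true_and]; omega]
          rw [Finset.sum_image (fun x _ y _ h => hjv h)]
          rw [show (Finset.univ.filter (fun p : Fin d => (p : ℕ) < t))
            = Finset.image (Fin.castLE htd) Finset.univ by
              rw [← hSimg]; ext q; simp only [Finset.mem_filter, Finset.mem_univ,
                true_and]; omega]
          rw [Finset.sum_image (fun x _ y _ h => (Fin.strictMono_castLE htd).injective h),
            Finset.sum_image (fun x _ y _ h => (Fin.strictMono_castLE htd).injective h)]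
          calc ∑ r : Fin t, α (jv (Fin.castLE htd r)) = ∑ r : Fin t, b r :=
                Finset.sum_congr rfl fun r _ => hα2 r
            _ = ∑ r : Fin t, a (Fin.castLE htd r) := hab.symm
        -- the antitone top-segment bound
        have htop := antitone_sum_top a hmono P
        rw [hPcard, show d - (d - t) = t by omega] at htop
        have hsplitk : ∑ p ∈ Finset.univ.filter (fun p : Fin d => (p : ℕ) < t), a p
            + ∑ p ∈ Finset.univ.filter (fun p : Fin d => t ≤ (p : ℕ)), a p = k := by
          rw [show (Finset.univ.filter (fun p : Fin d => t ≤ (p : ℕ)))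
            = Finset.univ.filter (fun p : Fin d => ¬ (p : ℕ) < t) by
              apply Finset.filter_congr; intro p _; simp]
          rw [Finset.sum_filter_add_sum_filter_not]
          exact hsum
        rw [hsplit, hsumF, hsumG]
        omega

/-- **From the proof of Theorem 2.1 (only-if part).** Let `Δ` be a `(d-1)`-dimensional
simplicial complex whose facets all have `d` elements, and which is not a matroid.
Pick facets `F = {i_1, …, i_d}` (with `i_1 = i`) and `G = {j_1, …, j_d}` and a vertex
`i ∈ F` such that `(F \ {i}) ∪ {j}` is not a facet for any `j ∈ G`; let `s` be the
greatest integer such that some `s`-dimensional subface `F_0 = {i_{d-s}, …, i_d}` of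
`F \ {i}` unions with some `(d-s-2)`-dimensional subface `G_0 = {j_1, …, j_{d-s-1}}`
of `G` to give a facet (so `-1 ≤ s ≤ d-3`).  Then for any tuple
`(a_1, …, a_d, b_1, …, b_{d-s-1})` of nonnegative integers with `a_1 + ⋯ + a_d = k`,
`a_1 + ⋯ + a_{d-s-1} = b_1 + ⋯ + b_{d-s-1}`, `a_1 ≥ ⋯ ≥ a_d` and all `b_q ≥ a_2`,
the function `α' : [n] → ℕ` with `α'(i_p) = a_p`, `α'(j_q) = b_q` for `q < d-s`, and
`α'(v) = k` otherwise, is a `k`-cover of `Δ`.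

Here faces are indexed starting from `0`: `iv p` is the vertex `i_{p+1}`, `a p` is
`a_{p+1}`, and so on. -/
theorem cover_construction_of_not_matroid (n : ℕ) (Δ : Set (Finset (Fin n)))
    (hΔ : IsSimplicialComplex Δ) (d : ℕ)
    (hpure : ∀ H : Finset (Fin n), IsFacet Δ H → H.card = d)
    (hnm : ¬ IsMatroid Δ)
    (s : ℤ) (hs : -1 ≤ s) (hsd : s ≤ (d : ℤ) - 3)
    (iv jv : Fin d → Fin n) (hiv : Function.Injective iv) (hjv : Function.Injective jv)
    (F G : Finset (Fin n)) (hF : IsFacet Δ F) (hG : IsFacet Δ G)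
    (hFiv : F = Finset.image iv Finset.univ) (hGjv : G = Finset.image jv Finset.univ)
    (i : Fin n) (hi : i = iv ⟨0, by omega⟩)
    (hnoexch : ∀ j ∈ G, ¬ IsFacet Δ (insert j (F.erase i)))
    (F₀ G₀ : Finset (Fin n))
    (hF₀ : F₀ = Finset.image iv {p : Fin d | (d : ℤ) - s - 1 ≤ (p : ℤ)})
    (hG₀ : G₀ = Finset.image jv {q : Fin d | (q : ℤ) < (d : ℤ) - s - 1})
    (hfacet : IsFacet Δ (F₀ ∪ G₀))
    (hmax : ∀ F' ⊆ F.erase i, ∀ G' ⊆ G, IsFacet Δ (F' ∪ G') → (F'.card : ℤ) ≤ s + 1)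
    (k : ℕ) (hk : 1 ≤ k)
    (a : Fin d → ℕ) (b : Fin ((d : ℤ) - s - 1).toNat → ℕ)
    (hsum : ∑ p, a p = k)
    (hab : ∑ q : Fin ((d : ℤ) - s - 1).toNat, a (Fin.castLE (by omega) q) = ∑ q, b q)
    (hmono : ∀ p p' : Fin d, p ≤ p' → a p' ≤ a p)
    (hb : ∀ q, a ⟨1, by omega⟩ ≤ b q)
    (α : Fin n → ℕ)
    (hα1 : ∀ p : Fin d, α (iv p) = a p)
    (hα2 : ∀ q : Fin ((d : ℤ) - s - 1).toNat, α (jv (Fin.castLE (by omega) q)) = b q)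
    (hα3 : ∀ v : Fin n, v ∉ F ∪ G₀ → α v = k) :
    IsCover Δ k α := by
  exact cover_aux n Δ d hpure s hs hsd iv jv hiv hjv F G hFiv hGjv i hi G₀ hG₀ hmax k hk
    ((d : ℤ) - s - 1).toNat (by omega) (by omega) (by omega) a b hsum hab hmono hb α hα1 hα2 hα3
end

section
/- Let $\Delta$ be a matroid on $[n]$. Then for any two facets $F$ and $G$ of $\Delta$ and any $i\in F$, there exists $j\in G$ such that both $(F\setminus\{i\})\cup\{j\}$ and $(G\setminus\{j\})\cup\{i\}$ are facets of $\Delta$ (symmetric exchange property). -/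
open MvPolynomial Filter

/-- **Exchange property.** Let `Δ` be a matroid on `[n]`.  For any two facets `F, G`
of `Δ` and any `i ∈ F`, there exists `j ∈ G` such that both `(F \ {i}) ∪ {j}` and
`(G \ {j}) ∪ {i}` are facets of `Δ`. -/
theorem matroid_symmetric_exchange (n : ℕ) (Δ : Set (Finset (Fin n)))
    (hΔ : IsMatroid Δ) :
    ∀ F G : Finset (Fin n), IsFacet Δ F → IsFacet Δ G → ∀ i ∈ F, ∃ j ∈ G,
      IsFacet Δ (insert j (F.erase i)) ∧ IsFacet Δ (insert i (G.erase j)) := by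
  classical
  intro F G hF hG i hiF
  by_cases hiG : i ∈ G
  · exact ⟨i, hiG, by rwa [Finset.insert_erase hiF], by rwa [Finset.insert_erase hiG]⟩
  -- Build a Mathlib matroid whose bases are the facets of Δ.
  set Bp : Set (Fin n) → Prop := fun S => ∃ H : Finset (Fin n), IsFacet Δ H ∧ S = ↑H with hBp
  have exch : Matroid.ExchangeProperty Bp := by
    rintro X Y ⟨Fx, hFx, rfl⟩ ⟨Fy, hFy, rfl⟩ a ha
    obtain ⟨haX, haY⟩ := ha
    rw [Finset.mem_coe] at haX
    obtain ⟨b, hbY, hfac⟩ := hΔ.2 Fx Fy hFx hFy a haX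
    have hbX : b ∉ Fx := by
      intro hbFx
      by_cases hba : b = a
      · exact haY (by simpa [hba] using hbY)
      · have h1 : insert b (Fx.erase a) = Fx.erase a :=
          Finset.insert_eq_self.2 (Finset.mem_erase.2 ⟨hba, hbFx⟩)
        rw [h1] at hfac
        have h2 : Fx = Fx.erase a := hfac.2 Fx hFx.1 (Finset.erase_subset a Fx)
        exact Finset.notMem_erase a Fx (h2 ▸ haX)
    refine ⟨b, ⟨hbY, by simpa using hbX⟩, insert b (Fx.erase a), hfac, ?_⟩
    simp [Finset.coe_insert, Finset.coe_erase]
  let M : Matroid (Fin n) :=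
    Matroid.ofIsBaseOfFinite Set.finite_univ Bp ⟨↑F, ⟨F, hF, rfl⟩⟩ exch
      (fun B _ => Set.subset_univ B)
  have hMBeq : M.IsBase = Bp := Matroid.ofIsBaseOfFinite_isBase _ _ _ _ _
  have hMB : ∀ S, M.IsBase S ↔ Bp S := fun S => by rw [hMBeq]
  have hME : M.E = Set.univ := rfl
  have hFb : M.IsBase ↑F := (hMB _).2 ⟨F, hF, rfl⟩
  have hGb : M.IsBase ↑G := (hMB _).2 ⟨G, hG, rfl⟩
  have hclG : M.closure ↑G = Set.univ := by
    rw [hGb.spanning.closure_eq, hME]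
  -- a minimal subset G' of G with i in its closure
  obtain ⟨G', hG's, hmin⟩ := Finset.exists_min_image
    (G.powerset.filter fun S : Finset (Fin n) => i ∈ M.closure (↑S : Set (Fin n))) Finset.card
    ⟨G, Finset.mem_filter.2 ⟨Finset.mem_powerset.2 (subset_refl G), by rw [hclG]; trivial⟩⟩
  rw [Finset.mem_filter, Finset.mem_powerset] at hG's
  obtain ⟨hG'G, hiG'⟩ := hG's
  have hmin' : ∀ j ∈ G', i ∉ M.closure ↑(G'.erase j) := by
    intro j hj hcon
    have hmem : G'.erase j ∈ G.powerset.filter fun S : Finset (Fin n) => i ∈ M.closure (↑S : Set (Fin n)) :=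
      Finset.mem_filter.2 ⟨Finset.mem_powerset.2 ((Finset.erase_subset _ _).trans hG'G), hcon⟩
    have h1 := hmin _ hmem
    have h2 := Finset.card_erase_lt_of_mem hj
    omega
  -- choose j in G' outside the closure of F \ {i}
  have hex : ∃ j ∈ G', (j : Fin n) ∉ M.closure ((↑F : Set (Fin n)) \ {i}) := by
    by_contra hcon
    push_neg at hcon
    have hsub : (↑G' : Set (Fin n)) ⊆ M.closure ((↑F : Set (Fin n)) \ {i}) :=
      fun x hx => hcon x (Finset.mem_coe.1 hx)
    have hicl : i ∈ M.closure ((↑F : Set (Fin n)) \ {i}) :=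
      (M.closure_subset_closure_of_subset_closure hsub) hiG'
    exact hFb.indep.notMem_closure_diff_of_mem (Finset.mem_coe.2 hiF) hicl
  obtain ⟨j, hjG', hjcl⟩ := hex
  have hjG : j ∈ G := hG'G hjG'
  have hji : j ≠ i := fun h => hiG (h ▸ hjG)
  have hjF : j ∉ F := by
    intro hjF
    exact hjcl (M.subset_closure _ (by rw [hME]; exact Set.subset_univ _)
      ⟨Finset.mem_coe.2 hjF, by simpa using hji⟩)
  -- Facet 1 : insert j (F.erase i)
  have hIF : M.Indep ((↑F : Set (Fin n)) \ {i}) := hFb.indep.subset Set.diff_subset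
  have hind : M.Indep (insert (j : Fin n) ((↑F : Set (Fin n)) \ {i})) := by
    rw [hIF.insert_indep_iff_of_notMem (fun h => hjF (Finset.mem_coe.1 h.1))]
    exact ⟨by rw [hME]; trivial, hjcl⟩
  have hb1 : M.IsBase (insert (j : Fin n) ((↑F : Set (Fin n)) \ {i})) :=
    hFb.exchange_isBase_of_indep (fun h => hjF (Finset.mem_coe.1 h)) hind
  obtain ⟨H1, hH1, hH1eq⟩ := (hMB _).1 hb1
  have e1 : insert j (F.erase i) = H1 := Finset.coe_injective
    (by rw [Finset.coe_insert, Finset.coe_erase]; exact hH1eq)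
  -- Facet 2 : insert i (G.erase j)
  have hjcl2 : (j : Fin n) ∈ M.closure (insert (i : Fin n) ((↑G' : Set (Fin n)) \ {j})) := by
    have h1 : (i : Fin n) ∈ M.closure (insert (j : Fin n) ((↑G' : Set (Fin n)) \ {j})) \
        M.closure ((↑G' : Set (Fin n)) \ {j}) := by
      constructor
      · have h2 : insert (j : Fin n) ((↑G' : Set (Fin n)) \ {j}) = ↑G' := by
          rw [← Finset.coe_erase, ← Finset.coe_insert, Finset.insert_erase hjG']
        rw [h2]; exact hiG'
      · have h3 := hmin' j hjG'
        rwa [Finset.coe_erase] at h3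
    exact (Matroid.closure_exchange h1).1
  have hspan : M.closure (insert (i : Fin n) ((↑G : Set (Fin n)) \ {j})) = Set.univ := by
    have hGsub : (↑G : Set (Fin n)) ⊆
        M.closure (insert (i : Fin n) ((↑G : Set (Fin n)) \ {j})) := by
      intro x hx
      by_cases hxj : x = j
      · subst hxj
        refine M.closure_subset_closure ?_ hjcl2
        exact Set.insert_subset_insert
          (Set.diff_subset_diff_left (Finset.coe_subset.2 hG'G))
      · exact M.subset_closure _ (by rw [hME]; exact Set.subset_univ _)
          (Set.mem_insert_of_mem _ ⟨hx, hxj⟩)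
    have h4 := M.closure_subset_closure_of_subset_closure hGsub
    rw [hclG] at h4
    exact Set.eq_univ_of_univ_subset h4
  have hsp : M.Spanning (insert (i : Fin n) ((↑G : Set (Fin n)) \ {j})) := by
    rw [Matroid.spanning_iff_closure_eq (by rw [hME]; exact Set.subset_univ _)]
    rw [hspan, hME]
  obtain ⟨B', hB', hB'sub⟩ := hsp.exists_isBase_subset
  have hS2 : insert (i : Fin n) ((↑G : Set (Fin n)) \ {j})
      = ↑(insert i (G.erase j)) := by
    rw [Finset.coe_insert, Finset.coe_erase]
  have hcard : (insert (i : Fin n) ((↑G : Set (Fin n)) \ {j})).encard ≤ B'.encard := by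
    rw [hB'.encard_eq_encard_of_isBase hGb, hS2, Set.encard_coe_eq_coe_finsetCard,
      Set.encard_coe_eq_coe_finsetCard,
      Finset.card_insert_of_notMem (fun h => hiG (Finset.mem_of_mem_erase h)),
      Finset.card_erase_of_mem hjG]
    have hpos := Finset.card_pos.2 ⟨j, hjG⟩
    exact_mod_cast Nat.le_of_eq (by omega)
  have hB'eq : B' = insert (i : Fin n) ((↑G : Set (Fin n)) \ {j}) :=
    Set.Finite.eq_of_subset_of_encard_le (Set.toFinite _) hB'sub hcard
  have hb2 : M.IsBase (insert (i : Fin n) ((↑G : Set (Fin n)) \ {j})) := hB'eq ▸ hB'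
  obtain ⟨H2, hH2, hH2eq⟩ := (hMB _).1 hb2
  have e2 : insert i (G.erase j) = H2 := Finset.coe_injective
    (by rw [Finset.coe_insert, Finset.coe_erase]; exact hH2eq)
  exact ⟨j, hjG, e1 ▸ hH1, e2 ▸ hH2⟩
end
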